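/- Let M be a graded module over the divided power algebra D, and suppose M admits a connection ∇ : M → M[1] (a k-linear map satisfying ∇(fm) = f∇(m) + d(f)m). Then the map Φ : M → D ⊗_k (M/D_+M) defined by Φ(m) = sum over n ≥ 0 of x^[n] ⊗ (∇^n m)_0 is an isomorphism of D-modules, where (m')_0 denotes the image of m' in M/D_+M. -/

import Mathlib

open scoped TensorProduct
open Finset

set_option linter.unusedSectionVars false
set_option linter.unusedVariables false
set_option maxHeartbeats 1000000

lemma stmt3_sum_diag {M : Type*} [AddCommMonoid M] (N : ℕ) (f : ℕ → ℕ → M)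
    (hf : ∀ a b, N ≤ a + b → f a b = 0) :
    ∑ j ∈ range N, ∑ a ∈ range (j + 1), f a (j - a) =
      ∑ a ∈ range N, ∑ b ∈ range N, f a b := by
  have h1 : ∀ j : ℕ, ∑ a ∈ range (j + 1), f a (j - a)
      = ∑ p ∈ Finset.HasAntidiagonal.antidiagonal j, f p.1 p.2 := fun j =>
    (Finset.Nat.sum_antidiagonal_eq_sum_range_succ_mk (fun p => f p.1 p.2) j).symm
  simp_rw [h1]
  rw [← Finset.sum_biUnion, ← Finset.sum_product']
  · apply Finset.sum_subset
    · intro p hp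
      simp only [Finset.mem_biUnion, Finset.mem_range, Finset.HasAntidiagonal.mem_antidiagonal] at hp
      obtain ⟨j, hj, hpj⟩ := hp
      simp only [Finset.mem_product, Finset.mem_range]
      omega
    · intro p hp hnp
      apply hf
      by_contra h
      push_neg at h
      exact hnp (Finset.mem_biUnion.2 ⟨p.1 + p.2, Finset.mem_range.2 h,
        Finset.HasAntidiagonal.mem_antidiagonal.2 rfl⟩)
  · intro i hi j hj hij
    simp only [Function.onFun]
    rw [Finset.disjoint_left]
    intro p hpi hpj
    rw [Finset.HasAntidiagonal.mem_antidiagonal] at hpi hpj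
    exact hij (hpi ▸ hpj ▸ rfl)

lemma stmt3_alt_sum {k : Type*} [CommRing k] (s : ℕ) (hs : s ≠ 0) :
    ∑ a ∈ range (s + 1), ((-1:k)^a * (s.choose a : k)) = 0 := by
  have h := Int.alternating_sum_range_choose_of_ne (n := s) hs
  have h2 := congrArg (fun z : ℤ => (z : k)) h
  push_cast at h2
  simpa using h2

section Stmt3Aux

variable {k D : Type*} [CommRing k] [CommRing D] [Algebra k D]
  {M : Type*} [AddCommGroup M] [Module D M] [Module k M] [IsScalarTower k D M]

lemma stmt3_sum_ext (B : ℕ → D) (nabla : M →ₗ[k] M) (m : M) {N N' : ℕ} (h : N ≤ N')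
    (hN : ∀ n ≥ N, (nabla ^ n) m = 0) :
    ∑ j ∈ range N', (-1:k)^j • (B j • (nabla ^ j) m)
      = ∑ j ∈ range N, (-1:k)^j • (B j • (nabla ^ j) m) := by
  refine (Finset.sum_subset (Finset.range_subset_range.2 h) fun x _ hx => ?_).symm
  rw [hN x (le_of_not_gt fun hlt => hx (Finset.mem_range.2 hlt))]
  simp

lemma stmt3_choose_sum_eq (B : ℕ → D) (nabla : M →ₗ[k] M)
    (hnil : ∀ m : M, ∃ N : ℕ, ∀ n ≥ N, (nabla ^ n) m = 0) (m : M) {N : ℕ}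
    (hN : ∀ n ≥ N, (nabla ^ n) m = 0) :
    ∑ j ∈ range (Classical.choose (hnil m)), (-1:k)^j • (B j • (nabla ^ j) m)
      = ∑ j ∈ range N, (-1:k)^j • (B j • (nabla ^ j) m) := by
  calc ∑ j ∈ range (Classical.choose (hnil m)), (-1:k)^j • (B j • (nabla ^ j) m)
      = ∑ j ∈ range (max (Classical.choose (hnil m)) N), (-1:k)^j • (B j • (nabla ^ j) m) :=
        (stmt3_sum_ext B nabla m (le_max_left _ _) (Classical.choose_spec (hnil m))).symm
    _ = ∑ j ∈ range N, (-1:k)^j • (B j • (nabla ^ j) m) :=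
        stmt3_sum_ext B nabla m (le_max_right _ _) hN

noncomputable def stmt3P (B : ℕ → D) (nabla : M →ₗ[k] M)
    (hnil : ∀ m : M, ∃ N : ℕ, ∀ n ≥ N, (nabla ^ n) m = 0) : M →ₗ[k] M where
  toFun m := ∑ j ∈ range (Classical.choose (hnil m)), (-1:k)^j • (B j • (nabla ^ j) m)
  map_add' m₁ m₂ := by
    obtain ⟨N₁, h₁⟩ := hnil m₁
    obtain ⟨N₂, h₂⟩ := hnil m₂
    have h₁' : ∀ n ≥ max N₁ N₂, (nabla ^ n) m₁ = 0 :=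
      fun n hn => h₁ n (le_trans (le_max_left _ _) hn)
    have h₂' : ∀ n ≥ max N₁ N₂, (nabla ^ n) m₂ = 0 :=
      fun n hn => h₂ n (le_trans (le_max_right _ _) hn)
    have h₁₂ : ∀ n ≥ max N₁ N₂, (nabla ^ n) (m₁ + m₂) = 0 := by
      intro n hn; rw [map_add, h₁' n hn, h₂' n hn, add_zero]
    rw [stmt3_choose_sum_eq B nabla hnil _ h₁₂, stmt3_choose_sum_eq B nabla hnil _ h₁',
      stmt3_choose_sum_eq B nabla hnil _ h₂', ← Finset.sum_add_distrib]
    exact Finset.sum_congr rfl fun j _ => by rw [map_add, smul_add, smul_add]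
  map_smul' c m := by
    obtain ⟨N, hN⟩ := hnil m
    have hc : ∀ n ≥ N, (nabla ^ n) (c • m) = 0 := by
      intro n hn; rw [map_smul, hN n hn, smul_zero]
    rw [RingHom.id_apply, stmt3_choose_sum_eq B nabla hnil _ hc,
      stmt3_choose_sum_eq B nabla hnil _ hN, Finset.smul_sum]
    exact Finset.sum_congr rfl fun j _ => by
      rw [map_smul, smul_comm (B j) c ((nabla ^ j) m), smul_comm ((-1:k)^j) c]

lemma stmt3P_apply (B : ℕ → D) (nabla : M →ₗ[k] M)
    (hnil : ∀ m : M, ∃ N : ℕ, ∀ n ≥ N, (nabla ^ n) m = 0) (m : M) {N : ℕ}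
    (hN : ∀ n ≥ N, (nabla ^ n) m = 0) :
    stmt3P B nabla hnil m = ∑ j ∈ range N, (-1:k)^j • (B j • (nabla ^ j) m) :=
  stmt3_choose_sum_eq B nabla hnil m hN

lemma stmt3_dpow (B : Module.Basis ℕ k D) (d : D →ₗ[k] D)
    (hd : ∀ n : ℕ, d (B n) = if n = 0 then 0 else B (n - 1)) (a s : ℕ) :
    (d ^ a) (B s) = if a ≤ s then B (s - a) else 0 := by
  induction a generalizing s with
  | zero => simp
  | succ a ih =>
    rw [pow_succ, Module.End.mul_apply, hd]
    rcases s with _ | t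
    · simp
    · simp only [Nat.succ_ne_zero, if_false, Nat.add_sub_cancel, ih t]
      simp [Nat.succ_sub_succ, Nat.succ_le_succ_iff]

lemma stmt3_leibniz (nabla : M →ₗ[k] M) (d : D →ₗ[k] D)
    (hconn : ∀ (f : D) (m : M), nabla (f • m) = f • nabla m + d f • m)
    (i : ℕ) (f : D) (m : M) :
    (nabla ^ i) (f • m) = ∑ a ∈ range (i + 1),
      (i.choose a : k) • ((d ^ a) f • (nabla ^ (i - a)) m) := by
  induction i with
  | zero => simp
  | succ i ih =>
    have hstep : (nabla ^ (i + 1)) (f • m) = nabla ((nabla ^ i) (f • m)) := by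
      rw [pow_succ', Module.End.mul_apply]
    rw [hstep, ih, map_sum]
    have h1 : ∀ a ∈ range (i + 1),
        nabla ((i.choose a : k) • ((d ^ a) f • (nabla ^ (i - a)) m))
          = (i.choose a : k) • ((d ^ a) f • (nabla ^ (i + 1 - a)) m)
            + (i.choose a : k) • ((d ^ (a + 1)) f • (nabla ^ (i - a)) m) := by
      intro a ha
      have h2 : nabla ((nabla ^ (i - a)) m) = (nabla ^ (i + 1 - a)) m := by
        rw [← Module.End.mul_apply, ← pow_succ']
        have h3 : i - a + 1 = i + 1 - a := by
          have := Finset.mem_range.1 ha; omega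
        rw [h3]
      rw [map_smul, hconn, smul_add, h2, pow_succ' d a, Module.End.mul_apply]
    rw [Finset.sum_congr rfl h1, Finset.sum_add_distrib]
    rw [Finset.sum_range_succ'
      (fun a => (((i + 1).choose a : k)) • ((d ^ a) f • (nabla ^ (i + 1 - a)) m)) (i + 1),
      Finset.sum_range_succ'
      (fun a => ((i.choose a : k)) • ((d ^ a) f • (nabla ^ (i + 1 - a)) m)) i]
    simp only [Nat.succ_sub_succ, Nat.choose_succ_succ, Nat.cast_add, add_smul,
      Finset.sum_add_distrib, Nat.choose_zero_right, Nat.cast_one, one_smul, Nat.sub_zero,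
      pow_zero, Module.End.one_apply]
    rw [Finset.sum_range_succ
      (fun a => ((i.choose (a + 1) : k)) • ((d ^ (a + 1)) f • (nabla ^ (i - a)) m)) i]
    simp only [Nat.choose_succ_self, Nat.cast_zero, zero_smul, add_zero]
    abel

lemma stmt3_P_Bsmul (B : Module.Basis ℕ k D)
    (hmul : ∀ n m : ℕ, B n * B m = ((n + m).choose n : k) • B (n + m))
    (d : D →ₗ[k] D)
    (hd : ∀ n : ℕ, d (B n) = if n = 0 then 0 else B (n - 1))
    (nabla : M →ₗ[k] M)
    (hconn : ∀ (f : D) (m : M), nabla (f • m) = f • nabla m + d f • m)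
    (hnil : ∀ m : M, ∃ N : ℕ, ∀ n ≥ N, (nabla ^ n) m = 0)
    (s : ℕ) (hs : s ≠ 0) (m : M) :
    stmt3P (⇑B) nabla hnil (B s • m) = 0 := by
  have leib := stmt3_leibniz nabla d hconn
  have dpow := stmt3_dpow B d hd
  obtain ⟨N, hN⟩ := hnil m
  have hbound : ∀ n ≥ N + s + 1, (nabla ^ n) (B s • m) = 0 := by
    intro n hn
    rw [leib n (B s) m]
    refine Finset.sum_eq_zero fun a ha => ?_
    rw [dpow a s]
    by_cases h : a ≤ s
    · rw [if_pos h, hN (n - a) (by omega), smul_zero, smul_zero]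
    · rw [if_neg h, zero_smul, smul_zero]
  rw [stmt3P_apply (⇑B) nabla hnil _ hbound]
  set N' := N + s + 1 with hN'
  set f : ℕ → ℕ → M := fun a b => ((-1:k)^(a+b) * ((a+b).choose a : k)) •
      ((B (a+b) * (d ^ a) (B s)) • (nabla ^ b) m) with hf
  have step1 : ∀ j ∈ range N', (-1:k)^j • (B j • (nabla ^ j) (B s • m))
      = ∑ a ∈ range (j + 1), f a (j - a) := by
    intro j _
    rw [leib j (B s) m, Finset.smul_sum, Finset.smul_sum]
    refine Finset.sum_congr rfl fun a ha => ?_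
    have haj : a ≤ j := by have := Finset.mem_range.1 ha; omega
    have h1 : a + (j - a) = j := by omega
    simp only [hf]
    rw [h1, smul_comm (B j) ((j.choose a : k)), smul_smul (B j), smul_smul ((-1:k)^j)]
  rw [Finset.sum_congr rfl step1]
  have hvan : ∀ a b : ℕ, N' ≤ a + b → f a b = 0 := by
    intro a b hab
    simp only [hf]
    by_cases h : a ≤ s
    · rw [hN b (by omega), smul_zero, smul_zero]
    · rw [dpow, if_neg h, mul_zero, zero_smul, smul_zero]
  rw [stmt3_sum_diag N' f hvan, Finset.sum_comm]
  refine Finset.sum_eq_zero fun b _ => ?_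
  have hsub : ∑ a ∈ range N', f a b = ∑ a ∈ range (s + 1), f a b := by
    refine (Finset.sum_subset (Finset.range_subset_range.2 (by omega)) fun a _ ha => ?_).symm
    have h : ¬ a ≤ s := by
      intro h; exact ha (Finset.mem_range.2 (by omega))
    simp only [hf]
    rw [dpow, if_neg h, mul_zero, zero_smul, smul_zero]
  rw [hsub]
  have step2 : ∀ a ∈ range (s + 1), f a b
      = ((-1:k)^b * (((s+b).choose b : k)) * ((-1:k)^a * (s.choose a : k)))
          • (B (s + b) • (nabla ^ b) m) := by
    intro a ha
    have has : a ≤ s := by have := Finset.mem_range.1 ha; omega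
    simp only [hf]
    rw [dpow, if_pos has, hmul]
    have h3 : a + b + (s - a) = s + b := by omega
    rw [h3, smul_assoc, smul_smul]
    congr 1
    have hch : ((a+b).choose b : k) * ((s+b).choose (a+b) : k)
        = ((s+b).choose b : k) * (s.choose a : k) := by
      have h4 := Nat.choose_mul (n := s + b) (show b ≤ a + b by omega)
      have h5 : (s+b).choose (a+b) * (a+b).choose b = (s+b).choose b * s.choose a := by
        simpa [Nat.add_sub_cancel] using h4
      have h6 := congrArg (fun z : ℕ => (z : k)) h5
      push_cast at h6
      rw [mul_comm] at h6
      exact h6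
    rw [Nat.choose_symm_add]
    calc (-1:k)^(a+b) * ((a+b).choose b : k) * ((s+b).choose (a+b) : k)
        = ((-1:k)^a * (-1:k)^b) * (((a+b).choose b : k) * ((s+b).choose (a+b) : k)) := by
          rw [pow_add]; ring
      _ = ((-1:k)^a * (-1:k)^b) * (((s+b).choose b : k) * (s.choose a : k)) := by rw [hch]
      _ = (-1:k)^b * ((s+b).choose b : k) * ((-1:k)^a * (s.choose a : k)) := by ring
  rw [Finset.sum_congr rfl step2, ← Finset.sum_smul, ← Finset.mul_sum,
    stmt3_alt_sum s hs, mul_zero, zero_smul]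

lemma stmt3_P_J (B : Module.Basis ℕ k D)
    (hmul : ∀ n m : ℕ, B n * B m = ((n + m).choose n : k) • B (n + m))
    (d : D →ₗ[k] D)
    (hd : ∀ n : ℕ, d (B n) = if n = 0 then 0 else B (n - 1))
    (nabla : M →ₗ[k] M)
    (hconn : ∀ (f : D) (m : M), nabla (f • m) = f • nabla m + d f • m)
    (hnil : ∀ m : M, ∃ N : ℕ, ∀ n ≥ N, (nabla ^ n) m = 0)
    (x : M)
    (hx : x ∈ (Ideal.span (Set.range fun n : ℕ => B (n + 1))) • (⊤ : Submodule D M)) :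
    stmt3P (⇑B) nabla hnil x = 0 := by
  have key : ∀ r ∈ Ideal.span (Set.range fun n : ℕ => B (n + 1)), ∀ m : M,
      stmt3P (⇑B) nabla hnil (r • m) = 0 := by
    intro r hr
    induction hr using Submodule.span_induction with
    | mem r hrs =>
      obtain ⟨n, rfl⟩ := hrs
      intro m
      exact stmt3_P_Bsmul B hmul d hd nabla hconn hnil (n+1) (Nat.succ_ne_zero n) m
    | zero => intro m; rw [zero_smul, map_zero]
    | add r₁ r₂ h₁ h₂ ih₁ ih₂ =>
      intro m; rw [add_smul, map_add, ih₁ m, ih₂ m, add_zero]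
    | smul c r hr ih =>
      intro m
      rw [smul_eq_mul, mul_comm, mul_smul]
      exact ih (c • m)
  refine Submodule.smul_induction_on hx (fun r hr n _ => key r hr n) ?_
  intro x y h₁ h₂
  rw [map_add, h₁, h₂, add_zero]

lemma stmt3_P_horizontal (B : Module.Basis ℕ k D) (d : D →ₗ[k] D)
    (hd : ∀ n : ℕ, d (B n) = if n = 0 then 0 else B (n - 1))
    (nabla : M →ₗ[k] M)
    (hconn : ∀ (f : D) (m : M), nabla (f • m) = f • nabla m + d f • m)
    (hnil : ∀ m : M, ∃ N : ℕ, ∀ n ≥ N, (nabla ^ n) m = 0) (m : M) :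
    nabla (stmt3P (⇑B) nabla hnil m) = 0 := by
  obtain ⟨N, hN⟩ := hnil m
  rw [stmt3P_apply (⇑B) nabla hnil m hN]
  have hp : ∀ j : ℕ, nabla ((nabla ^ j) m) = (nabla ^ (j+1)) m := by
    intro j; rw [pow_succ', Module.End.mul_apply]
  rcases N with _ | N₀
  · simp
  · rw [map_sum]
    have h1 : ∀ j ∈ range (N₀ + 1), nabla ((-1:k)^j • (B j • (nabla ^ j) m))
        = (-1:k)^j • (B j • (nabla ^ (j+1)) m) + (-1:k)^j • (d (B j) • (nabla ^ j) m) := by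
      intro j _
      rw [map_smul, hconn, smul_add, hp j]
    rw [Finset.sum_congr rfl h1, Finset.sum_add_distrib]
    rw [Finset.sum_range_succ (fun j => (-1:k)^j • (B j • (nabla ^ (j+1)) m)) N₀,
      hN (N₀ + 1) (le_refl _), smul_zero, smul_zero, add_zero]
    rw [Finset.sum_range_succ' (fun j => (-1:k)^j • (d (B j) • (nabla ^ j) m)) N₀]
    simp only [hd, Nat.succ_ne_zero, if_false, Nat.add_sub_cancel, eq_self_iff_true,
      if_true, zero_smul, smul_zero, add_zero, pow_zero, one_smul]
    rw [← Finset.sum_add_distrib]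
    refine Finset.sum_eq_zero fun j _ => ?_
    rw [pow_succ (-1:k) j, mul_neg_one, neg_smul, add_neg_cancel]

lemma stmt3_P_sub_mem (B : Module.Basis ℕ k D) (hone : B 0 = 1)
    (nabla : M →ₗ[k] M)
    (hnil : ∀ m : M, ∃ N : ℕ, ∀ n ≥ N, (nabla ^ n) m = 0) (m : M) :
    stmt3P (⇑B) nabla hnil m - m ∈
      Submodule.restrictScalars k
        ((Ideal.span (Set.range fun n : ℕ => B (n + 1))) • (⊤ : Submodule D M)) := by
  obtain ⟨N, hN⟩ := hnil m
  rw [stmt3P_apply (⇑B) nabla hnil m hN]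
  rcases N with _ | N₀
  · have h0 : m = 0 := by simpa using hN 0 (le_refl 0)
    simp [h0]
  · rw [Finset.sum_range_succ' (fun j => (-1:k)^j • (B j • (nabla ^ j) m)) N₀]
    have h00 : (-1:k)^0 • (B 0 • (nabla ^ 0) m) = m := by
      simp [hone]
    rw [h00, add_sub_cancel_right]
    refine Submodule.sum_mem _ fun j _ => ?_
    refine Submodule.smul_mem _ _ ?_
    rw [Submodule.restrictScalars_mem]
    exact Submodule.smul_mem_smul (Ideal.subset_span ⟨j, rfl⟩) Submodule.mem_top

lemma stmt3_sum_P (B : Module.Basis ℕ k D) (hone : B 0 = 1)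
    (hmul : ∀ n m : ℕ, B n * B m = ((n + m).choose n : k) • B (n + m))
    (nabla : M →ₗ[k] M)
    (hnil : ∀ m : M, ∃ N : ℕ, ∀ n ≥ N, (nabla ^ n) m = 0) (m : M) {N : ℕ}
    (hN : ∀ n ≥ N, (nabla ^ n) m = 0) :
    ∑ n ∈ range N, B n • stmt3P (⇑B) nabla hnil ((nabla ^ n) m) = m := by
  rcases Nat.eq_zero_or_pos N with h0 | hpos
  · subst h0
    have := hN 0 (le_refl 0)
    simp only [pow_zero, Module.End.one_apply] at this
    simp [this]
  · have hP : ∀ n : ℕ, stmt3P (⇑B) nabla hnil ((nabla ^ n) m)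
        = ∑ j ∈ range N, (-1:k)^j • (B j • (nabla ^ (j + n)) m) := by
      intro n
      have hb : ∀ i ≥ N, (nabla ^ i) ((nabla ^ n) m) = 0 := by
        intro i hi
        rw [← Module.End.mul_apply, ← pow_add]
        exact hN (i + n) (by omega)
      rw [stmt3P_apply (⇑B) nabla hnil _ hb]
      refine Finset.sum_congr rfl fun j _ => ?_
      rw [← Module.End.mul_apply, ← pow_add]
    set f : ℕ → ℕ → M := fun a b => ((-1:k)^a * ((a+b).choose a : k)) •
        (B (a+b) • (nabla ^ (a+b)) m) with hf
    have step1 : ∀ n ∈ range N, B n • stmt3P (⇑B) nabla hnil ((nabla ^ n) m)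
        = ∑ j ∈ range N, f j n := by
      intro n _
      rw [hP n, Finset.smul_sum]
      refine Finset.sum_congr rfl fun j _ => ?_
      simp only [hf]
      rw [smul_comm (B n) ((-1:k)^j), smul_smul (B n) (B j), hmul n j,
        smul_assoc, smul_smul, Nat.choose_symm_add, Nat.add_comm n j]
    rw [Finset.sum_congr rfl step1, Finset.sum_comm]
    have hvan : ∀ a b : ℕ, N ≤ a + b → f a b = 0 := by
      intro a b hab
      simp only [hf]
      rw [hN (a+b) hab, smul_zero, smul_zero]
    rw [← stmt3_sum_diag N f hvan]
    have step2 : ∀ t ∈ range N, ∑ j ∈ range (t + 1), f j (t - j)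
        = (∑ j ∈ range (t + 1), (-1:k)^j * (t.choose j : k)) • (B t • (nabla ^ t) m) := by
      intro t _
      rw [Finset.sum_smul]
      refine Finset.sum_congr rfl fun j hj => ?_
      have h2 : j + (t - j) = t := by have := Finset.mem_range.1 hj; omega
      simp only [hf]
      rw [h2]
    rw [Finset.sum_congr rfl step2]
    have halt : ∀ t : ℕ, (∑ j ∈ range (t + 1), (-1:k)^j * (t.choose j : k))
        = if t = 0 then 1 else 0 := by
      intro t
      by_cases ht : t = 0
      · subst ht; simp
      · rw [stmt3_alt_sum t ht, if_neg ht]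
    rw [Finset.sum_congr rfl (fun t _ => by rw [halt t])]
    rw [Finset.sum_eq_single 0 (fun t _ ht => by rw [if_neg ht, zero_smul])
      (fun h => absurd (Finset.mem_range.2 hpos) h)]
    simp [hone]

end Stmt3Aux

/-- If a graded (bounded-below) `D`-module `M` admits a connection `nabla`, then
`Φ(m) = ∑ n, x^[n] ⊗ (nabla^n m)₀` is an isomorphism of `D`-modules `M ≅ D ⊗ₖ (M / D₊M)`.
Bounded-below-ness is encoded by local nilpotence of `nabla` (the sum is finite). -/
theorem stmt3 (k D : Type*) [CommRing k] [CommRing D] [Algebra k D]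
    (B : Module.Basis ℕ k D) (hone : B 0 = 1)
    (hmul : ∀ n m : ℕ, B n * B m = ((n + m).choose n : k) • B (n + m))
    (d : D →ₗ[k] D)
    (hd : ∀ n : ℕ, d (B n) = if n = 0 then 0 else B (n - 1))
    (M : Type*) [AddCommGroup M] [Module D M] [Module k M] [IsScalarTower k D M]
    (nabla : M →ₗ[k] M)
    (hconn : ∀ (f : D) (m : M), nabla (f • m) = f • nabla m + d f • m)
    (hnil : ∀ m : M, ∃ N : ℕ, ∀ n ≥ N, (nabla ^ n) m = 0) :
    ∃ Φ : M ≃ₗ[D] (D ⊗[k] (M ⧸ Submodule.restrictScalars k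
        ((Ideal.span (Set.range fun n : ℕ => B (n + 1))) • (⊤ : Submodule D M)))),
      ∀ (m : M) (N : ℕ), (∀ n ≥ N, (nabla ^ n) m = 0) →
        Φ m = ∑ n ∈ Finset.range N, B n ⊗ₜ[k]
          (Submodule.mkQ _ ((nabla ^ n) m)) := by
  classical
  set Jk : Submodule k M := Submodule.restrictScalars k
    ((Ideal.span (Set.range fun n : ℕ => B (n + 1))) • (⊤ : Submodule D M)) with hJk
  set P : M →ₗ[k] M := stmt3P (⇑B) nabla hnil with hPdef
  have hker : Jk ≤ LinearMap.ker P := by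
    intro x hx
    rw [LinearMap.mem_ker]
    exact stmt3_P_J B hmul d hd nabla hconn hnil x hx
  set sbar : (M ⧸ Jk) →ₗ[k] M := Jk.liftQ P hker with hsbar
  set Ψ : D ⊗[k] (M ⧸ Jk) →ₗ[D] M := LinearMap.liftBaseChange D sbar with hΨ
  have hsbar_mk : ∀ m : M, sbar (Jk.mkQ m) = P m := fun m => rfl
  have hΨsum : ∀ (m : M) (N : ℕ), (∀ n ≥ N, (nabla ^ n) m = 0) →
      Ψ (∑ n ∈ range N, B n ⊗ₜ[k] (Jk.mkQ ((nabla ^ n) m))) = m := by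
    intro m N hN
    rw [map_sum]
    calc ∑ n ∈ range N, Ψ (B n ⊗ₜ[k] Jk.mkQ ((nabla ^ n) m))
        = ∑ n ∈ range N, B n • P ((nabla ^ n) m) := by
          refine Finset.sum_congr rfl fun n _ => ?_
          rw [hΨ, LinearMap.liftBaseChange_tmul, hsbar_mk]
      _ = m := stmt3_sum_P B hone hmul nabla hnil m hN
  have hsurj : Function.Surjective Ψ := by
    intro m
    obtain ⟨N, hN⟩ := hnil m
    exact ⟨_, hΨsum m N hN⟩
  have hπs : ∀ q : M ⧸ Jk, Jk.mkQ (sbar q) = q := by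
    intro q
    obtain ⟨m, rfl⟩ := Jk.mkQ_surjective q
    rw [hsbar_mk]
    rw [Submodule.mkQ_apply, Submodule.mkQ_apply, Submodule.Quotient.eq]
    exact stmt3_P_sub_mem B hone nabla hnil m
  have hhor : ∀ q : M ⧸ Jk, nabla (sbar q) = 0 := by
    intro q
    obtain ⟨m, rfl⟩ := Jk.mkQ_surjective q
    rw [hsbar_mk]
    exact stmt3_P_horizontal B d hd nabla hconn hnil m
  have hBmem : ∀ i : ℕ, 1 ≤ i → ∀ x : M, B i • x ∈ Jk := by
    intro i hi x
    rw [hJk, Submodule.restrictScalars_mem]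
    refine Submodule.smul_mem_smul ?_ Submodule.mem_top
    refine Ideal.subset_span ⟨i - 1, ?_⟩
    show B (i - 1 + 1) = B i
    rw [Nat.sub_add_cancel hi]
  have hzero : ∀ (N : ℕ) (q : ℕ → M ⧸ Jk),
      (∑ n ∈ range N, B n • sbar (q n)) = 0 → ∀ n < N, q n = 0 := by
    intro N
    induction N with
    | zero => exact fun q _ n hn => absurd hn (Nat.not_lt_zero n)
    | succ N ih =>
      intro q h0 n hn
      have hq0 : q 0 = 0 := by
        have h2 := congrArg Jk.mkQ h0
        rw [map_sum, map_zero] at h2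
        rw [Finset.sum_eq_single 0 (fun i _ hi => by
            rw [Submodule.mkQ_apply, Submodule.Quotient.mk_eq_zero]
            exact hBmem i (by omega) _)
          (fun habs => absurd (Finset.mem_range.2 (Nat.succ_pos N)) habs)] at h2
        rwa [hone, one_smul, hπs] at h2
      have hterm : ∀ i : ℕ, nabla (B i • sbar (q i)) = d (B i) • sbar (q i) := by
        intro i; rw [hconn, hhor, smul_zero, zero_add]
      have hstep : ∑ i ∈ range N, B i • sbar (q (i + 1)) = 0 := by
        have h2 := congrArg nabla h0
        rw [map_sum, map_zero, Finset.sum_congr rfl (fun i (_ : i ∈ range (N + 1)) => hterm i),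
          Finset.sum_range_succ' (fun i => d (B i) • sbar (q i)) N] at h2
        simpa only [hd, Nat.succ_ne_zero, if_false, Nat.add_sub_cancel, eq_self_iff_true,
          if_true, zero_smul, add_zero] using h2
      rcases n with _ | n'
      · exact hq0
      · exact ih (fun i => q (i + 1)) hstep n' (by omega)
  have hrepr : ∀ x : D ⊗[k] (M ⧸ Jk), ∃ (N : ℕ) (q : ℕ → M ⧸ Jk),
      x = ∑ n ∈ range N, B n ⊗ₜ[k] q n := by
    intro x
    induction x using TensorProduct.induction_on with
    | zero => exact ⟨0, fun _ => 0, by simp⟩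
    | tmul f q =>
      refine ⟨((B.repr f).support.sup id) + 1, fun n => (B.repr f) n • q, ?_⟩
      have hsub : (B.repr f).support ⊆ range (((B.repr f).support.sup id) + 1) := by
        intro i hi
        exact Finset.mem_range.2 (Nat.lt_succ_of_le (Finset.le_sup (f := id) hi))
      have hfr : f = ∑ i ∈ range (((B.repr f).support.sup id) + 1), (B.repr f) i • B i := by
        conv_lhs => rw [← B.linearCombination_repr f]
        rw [Finsupp.linearCombination_apply]
        exact Finsupp.sum_of_support_subset _ hsub _ (fun i _ => zero_smul k (B i))
      conv_lhs => rw [hfr]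
      rw [TensorProduct.sum_tmul]
      exact Finset.sum_congr rfl fun i _ => TensorProduct.smul_tmul _ _ _
    | add x y hx hy =>
      obtain ⟨N₁, q₁, rfl⟩ := hx
      obtain ⟨N₂, q₂, rfl⟩ := hy
      refine ⟨max N₁ N₂, fun n => (if n < N₁ then q₁ n else 0) + (if n < N₂ then q₂ n else 0), ?_⟩
      have e1 : ∑ n ∈ range N₁, B n ⊗ₜ[k] q₁ n
          = ∑ n ∈ range (max N₁ N₂), B n ⊗ₜ[k] (if n < N₁ then q₁ n else 0) := by
        calc ∑ n ∈ range N₁, B n ⊗ₜ[k] q₁ n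
            = ∑ n ∈ range N₁, B n ⊗ₜ[k] (if n < N₁ then q₁ n else 0) :=
              Finset.sum_congr rfl fun n hn => by rw [if_pos (Finset.mem_range.1 hn)]
          _ = ∑ n ∈ range (max N₁ N₂), B n ⊗ₜ[k] (if n < N₁ then q₁ n else 0) :=
              Finset.sum_subset (Finset.range_subset_range.2 (le_max_left _ _)) (fun i _ hi => by
                rw [if_neg (by simpa using hi), TensorProduct.tmul_zero])
      have e2 : ∑ n ∈ range N₂, B n ⊗ₜ[k] q₂ n
          = ∑ n ∈ range (max N₁ N₂), B n ⊗ₜ[k] (if n < N₂ then q₂ n else 0) := by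
        calc ∑ n ∈ range N₂, B n ⊗ₜ[k] q₂ n
            = ∑ n ∈ range N₂, B n ⊗ₜ[k] (if n < N₂ then q₂ n else 0) :=
              Finset.sum_congr rfl fun n hn => by rw [if_pos (Finset.mem_range.1 hn)]
          _ = ∑ n ∈ range (max N₁ N₂), B n ⊗ₜ[k] (if n < N₂ then q₂ n else 0) :=
              Finset.sum_subset (Finset.range_subset_range.2 (le_max_right _ _)) (fun i _ hi => by
                rw [if_neg (by simpa using hi), TensorProduct.tmul_zero])
      rw [e1, e2, ← Finset.sum_add_distrib]
      exact Finset.sum_congr rfl fun n _ => (TensorProduct.tmul_add _ _ _).symm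
  have hinj : Function.Injective Ψ := by
    refine LinearMap.ker_eq_bot.mp (LinearMap.ker_eq_bot'.mpr ?_)
    intro x hx0
    obtain ⟨N, q, rfl⟩ := hrepr x
    have hc : ∑ n ∈ range N, B n • sbar (q n) = 0 := by
      rw [map_sum] at hx0
      simpa only [hΨ, LinearMap.liftBaseChange_tmul] using hx0
    have hq := hzero N q hc
    refine Finset.sum_eq_zero fun n hn => ?_
    rw [hq n (Finset.mem_range.1 hn), TensorProduct.tmul_zero]
  refine ⟨(LinearEquiv.ofBijective Ψ ⟨hinj, hsurj⟩).symm, ?_⟩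
  intro m N hN
  rw [LinearEquiv.symm_apply_eq]
  exact (hΨsum m N hN).symm
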